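/- Let (L,σ) and (L,σ') be two factor systems for (𝒢,𝒩) with the same L. Then for every composable pair (x,y), the element σ(x,y)⁻¹σ'(x,y) lies in the center Z(N_{r(x)}), and the map σ⁻¹·σ' is a 2-cocycle in Z²(𝒢, Z(𝒩))_L for the Abelian groupoid cohomology of 𝒢 with coefficients in the center bundle Z(𝒩) with module structure induced by L. -/
import Mathlib


/-- A groupoid over a unit space `U`, with a total (junk-valued outside composables)
multiplication. `e : U → G` is the inclusion of units. -/
structure Gpd (G U : Type) where
  s : G → U
  r : G → U
  e : U → G
  mul : G → G → G
  inv : G → G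
  s_e : ∀ u, s (e u) = u
  r_e : ∀ u, r (e u) = u
  e_mul : ∀ x, mul (e (r x)) x = x
  mul_e : ∀ x, mul x (e (s x)) = x
  s_inv : ∀ x, s (inv x) = r x
  r_inv : ∀ x, r (inv x) = s x
  inv_mul : ∀ x, mul (inv x) x = e (s x)
  mul_inv : ∀ x, mul x (inv x) = e (r x)
  r_mul : ∀ x y, s x = r y → r (mul x y) = r x
  s_mul : ∀ x y, s x = r y → s (mul x y) = s y
  assoc : ∀ x y z, s x = r y → s y = r z → mul (mul x y) z = mul x (mul y z)

/-- A group bundle over `U`: a total space `N` with projection `p`, each fiber being a group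
(operations are total, with group laws holding fiberwise). -/
structure GrpBundle (N U : Type) where
  p : N → U
  one : U → N
  mul : N → N → N
  inv : N → N
  p_one : ∀ u, p (one u) = u
  p_mul : ∀ n m, p n = p m → p (mul n m) = p n
  p_inv : ∀ n, p (inv n) = p n
  one_mul : ∀ n, mul (one (p n)) n = n
  mul_one : ∀ n, mul n (one (p n)) = n
  inv_mul : ∀ n, mul (inv n) n = one (p n)
  mul_inv : ∀ n, mul n (inv n) = one (p n)
  assoc : ∀ a b c, p a = p b → p b = p c → mul (mul a b) c = mul a (mul b c)

/-- A pair `(L, σ)` satisfying all the conditions of a factor system for `(𝒢, 𝒩)` except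
possibly the twisted cocycle condition (F2): `L` is a family of fiberwise group isomorphisms
`L x : N_{s x} → N_{r x}`, trivial on units, and `σ : 𝒢⁽²⁾ → 𝒩` is normalized with
`σ (x, y) ∈ N_{r x}`, satisfying the twisted action condition (F1). -/
structure PreFS {G U N : Type} (𝒢 : Gpd G U) (𝒩 : GrpBundle N U) where
  L : G → N → N
  σ : G → G → N
  L_fib : ∀ x n, 𝒩.p n = 𝒢.s x → 𝒩.p (L x n) = 𝒢.r x
  L_mul : ∀ x n m, 𝒩.p n = 𝒢.s x → 𝒩.p m = 𝒢.s x →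
    L x (𝒩.mul n m) = 𝒩.mul (L x n) (L x m)
  L_bij : ∀ x, Set.BijOn (L x) {n | 𝒩.p n = 𝒢.s x} {n | 𝒩.p n = 𝒢.r x}
  L_e : ∀ u n, 𝒩.p n = u → L (𝒢.e u) n = n
  σ_fib : ∀ x y, 𝒢.s x = 𝒢.r y → 𝒩.p (σ x y) = 𝒢.r x
  σ_e_left : ∀ x, σ (𝒢.e (𝒢.r x)) x = 𝒩.one (𝒢.r x)
  σ_e_right : ∀ x, σ x (𝒢.e (𝒢.s x)) = 𝒩.one (𝒢.r x)
  F1 : ∀ x y n, 𝒢.s x = 𝒢.r y → 𝒩.p n = 𝒢.s y →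
    L x (L y n) = 𝒩.mul (𝒩.mul (σ x y) (L (𝒢.mul x y) n)) (𝒩.inv (σ x y))

/-- A factor system `(L, σ)` for `(𝒢, 𝒩)`: conditions (F1) and (F2). -/
structure FS {G U N : Type} (𝒢 : Gpd G U) (𝒩 : GrpBundle N U) extends PreFS 𝒢 𝒩 where
  F2 : ∀ x y z, 𝒢.s x = 𝒢.r y → 𝒢.s y = 𝒢.r z →
    𝒩.mul (σ x y) (σ (𝒢.mul x y) z) = 𝒩.mul (L x (σ y z)) (σ x (𝒢.mul y z))

/-- The fiber of a group bundle over `u`. -/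
def Fib {N U : Type} (𝒩 : GrpBundle N U) (u : U) := {n : N // 𝒩.p n = u}

instance fibGroup {N U : Type} (𝒩 : GrpBundle N U) (u : U) : Group (Fib 𝒩 u) where
  mul a b := ⟨𝒩.mul a.1 b.1, by rw [𝒩.p_mul _ _ (a.2.trans b.2.symm), a.2]⟩
  one := ⟨𝒩.one u, 𝒩.p_one u⟩
  inv a := ⟨𝒩.inv a.1, (𝒩.p_inv a.1).trans a.2⟩
  mul_assoc a b c := Subtype.ext (𝒩.assoc a.1 b.1 c.1 (a.2.trans b.2.symm) (b.2.trans c.2.symm))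
  one_mul a := Subtype.ext (by have := 𝒩.one_mul a.1; rwa [a.2] at this)
  mul_one a := Subtype.ext (by have := 𝒩.mul_one a.1; rwa [a.2] at this)
  inv_mul_cancel a := Subtype.ext (by have := 𝒩.inv_mul a.1; rwa [a.2] at this)

@[simp] lemma fib_mul_val {N U : Type} (𝒩 : GrpBundle N U) (u : U) (a b : Fib 𝒩 u) :
    (a * b).1 = 𝒩.mul a.1 b.1 := rfl

@[simp] lemma fib_inv_val {N U : Type} (𝒩 : GrpBundle N U) (u : U) (a : Fib 𝒩 u) :
    (a⁻¹).1 = 𝒩.inv a.1 := rfl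

@[simp] lemma fib_one_val {N U : Type} (𝒩 : GrpBundle N U) (u : U) :
    (1 : Fib 𝒩 u).1 = 𝒩.one u := rfl

lemma PreFS.L_one {G U N : Type} {𝒢 : Gpd G U} {𝒩 : GrpBundle N U} (P : PreFS 𝒢 𝒩) (x : G) :
    P.L x (𝒩.one (𝒢.s x)) = 𝒩.one (𝒢.r x) := by
  have hp : 𝒩.p (P.L x (𝒩.one (𝒢.s x))) = 𝒢.r x := P.L_fib _ _ (𝒩.p_one _)
  have h1 : 𝒩.mul (𝒩.one (𝒢.s x)) (𝒩.one (𝒢.s x)) = 𝒩.one (𝒢.s x) := by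
    have := 𝒩.one_mul (𝒩.one (𝒢.s x)); rwa [𝒩.p_one] at this
  have hw : 𝒩.mul (P.L x (𝒩.one (𝒢.s x))) (P.L x (𝒩.one (𝒢.s x))) = P.L x (𝒩.one (𝒢.s x)) := by
    rw [← P.L_mul x _ _ (𝒩.p_one _) (𝒩.p_one _), h1]
  let W : Fib 𝒩 (𝒢.r x) := ⟨P.L x (𝒩.one (𝒢.s x)), hp⟩
  have hW : W * W = W := Subtype.ext hw
  have : W = 1 := mul_left_cancel (a := W) (show W * W = W * 1 by rw [hW, mul_one])
  exact congrArg Subtype.val this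

lemma PreFS.L_inv {G U N : Type} {𝒢 : Gpd G U} {𝒩 : GrpBundle N U} (P : PreFS 𝒢 𝒩) (x : G)
    (n : N) (hn : 𝒩.p n = 𝒢.s x) : P.L x (𝒩.inv n) = 𝒩.inv (P.L x n) := by
  have hin : 𝒩.p (𝒩.inv n) = 𝒢.s x := (𝒩.p_inv n).trans hn
  have hmul : 𝒩.mul (P.L x (𝒩.inv n)) (P.L x n) = 𝒩.one (𝒢.r x) := by
    rw [← P.L_mul x _ _ hin hn]
    have : 𝒩.mul (𝒩.inv n) n = 𝒩.one (𝒢.s x) := by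
      have := 𝒩.inv_mul n; rwa [hn] at this
    rw [this, P.L_one]
  let A : Fib 𝒩 (𝒢.r x) := ⟨P.L x (𝒩.inv n), P.L_fib x _ hin⟩
  let B : Fib 𝒩 (𝒢.r x) := ⟨P.L x n, P.L_fib x _ hn⟩
  have : A = B⁻¹ := eq_inv_of_mul_eq_one_left (Subtype.ext hmul)
  exact congrArg Subtype.val this

/-- Pure group-theoretic core of the cocycle computation. -/
lemma key_group {H : Type} [Group H] (a a' b b' ct ct' d d' : H)
    (h1 : a * b = ct * d) (h2 : a' * b' = ct' * d')
    (hA : ∀ m, (a⁻¹ * a') * m = m * (a⁻¹ * a'))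
    (hC : ∀ m, (ct⁻¹ * ct') * m = m * (ct⁻¹ * ct')) :
    (ct⁻¹ * ct') * (d⁻¹ * d') = (a⁻¹ * a') * (b⁻¹ * b') := by
  have hb : b = a⁻¹ * (ct * d) := by rw [← h1]; group
  have hb' : b' = a'⁻¹ * (ct' * d') := by rw [← h2]; group
  have hcomm : a' * a = a * a' := by
    have h := hA a
    have : a⁻¹ * a' * a = a' := by rw [h]; group
    calc a' * a = a * (a⁻¹ * a' * a) := by group
      _ = a * a' := by rw [this]
  have haa : a * a'⁻¹ = (a⁻¹ * a')⁻¹ := by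
    rw [mul_inv_rev, inv_inv]
    have : a'⁻¹ * (a' * a) * a'⁻¹ = a'⁻¹ * (a * a') * a'⁻¹ := by rw [hcomm]
    calc a * a'⁻¹ = a'⁻¹ * (a' * a) * a'⁻¹ := by group
      _ = a'⁻¹ * (a * a') * a'⁻¹ := this
      _ = a'⁻¹ * a := by group
  symm
  calc (a⁻¹ * a') * (b⁻¹ * b')
      = (a⁻¹ * a') * ((d⁻¹ * ct⁻¹) * ((a * a'⁻¹) * (ct' * d'))) := by rw [hb, hb']; group
    _ = (d⁻¹ * ct⁻¹) * ((a⁻¹ * a') * ((a * a'⁻¹) * (ct' * d'))) := by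
        rw [← mul_assoc, hA (d⁻¹ * ct⁻¹), mul_assoc]
    _ = (d⁻¹ * ct⁻¹) * (ct' * d') := by rw [haa]; group
    _ = d⁻¹ * ((ct⁻¹ * ct') * d') := by group
    _ = d⁻¹ * (d' * (ct⁻¹ * ct')) := by rw [hC d']
    _ = (ct⁻¹ * ct') * (d⁻¹ * d') := by rw [hC (d⁻¹ * d')]; group

/-- Let `(L,σ)` and `(L,σ')` be factor systems for `(𝒢,𝒩)` with the same `L`.
Then `σ(x,y)⁻¹σ'(x,y)` is central in the fiber `N_{r x}` for every composable `(x,y)`, and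
`σ⁻¹·σ'` is a 2-cocycle for the Abelian groupoid cohomology with coefficients in the center
bundle `Z(𝒩)` with module structure induced by `L`. -/
theorem stmt9 {G U N : Type} (𝒢 : Gpd G U) (𝒩 : GrpBundle N U) (F F' : FS 𝒢 𝒩)
    (hL : F'.L = F.L) :
    -- centrality
    (∀ x y, 𝒢.s x = 𝒢.r y → ∀ m, 𝒩.p m = 𝒢.r x →
      𝒩.mul (𝒩.mul (𝒩.inv (F.σ x y)) (F'.σ x y)) m =
        𝒩.mul m (𝒩.mul (𝒩.inv (F.σ x y)) (F'.σ x y))) ∧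
    -- normalization of the 2-cochain σ⁻¹·σ'
    (∀ x, 𝒩.mul (𝒩.inv (F.σ (𝒢.e (𝒢.r x)) x)) (F'.σ (𝒢.e (𝒢.r x)) x) = 𝒩.one (𝒢.r x)) ∧
    (∀ x, 𝒩.mul (𝒩.inv (F.σ x (𝒢.e (𝒢.s x)))) (F'.σ x (𝒢.e (𝒢.s x))) = 𝒩.one (𝒢.r x)) ∧
    (∀ x y, 𝒢.s x = 𝒢.r y →
      𝒩.p (𝒩.mul (𝒩.inv (F.σ x y)) (F'.σ x y)) = 𝒢.r x) ∧
    -- the 2-cocycle identity: L_x(ρ(y,z)) ρ(x,yz) = ρ(x,y) ρ(xy,z)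
    (∀ x y z, 𝒢.s x = 𝒢.r y → 𝒢.s y = 𝒢.r z →
      𝒩.mul (F.L x (𝒩.mul (𝒩.inv (F.σ y z)) (F'.σ y z)))
          (𝒩.mul (𝒩.inv (F.σ x (𝒢.mul y z))) (F'.σ x (𝒢.mul y z))) =
        𝒩.mul (𝒩.mul (𝒩.inv (F.σ x y)) (F'.σ x y))
          (𝒩.mul (𝒩.inv (F.σ (𝒢.mul x y) z)) (F'.σ (𝒢.mul x y) z))) := by
    -- centrality
  have hcent : ∀ x y, 𝒢.s x = 𝒢.r y → ∀ m, 𝒩.p m = 𝒢.r x →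
      𝒩.mul (𝒩.mul (𝒩.inv (F.σ x y)) (F'.σ x y)) m =
        𝒩.mul m (𝒩.mul (𝒩.inv (F.σ x y)) (F'.σ x y)) := by
    intro x y h m hm
    have hrxy : 𝒢.r (𝒢.mul x y) = 𝒢.r x := 𝒢.r_mul x y h
    obtain ⟨n, hn, hLn⟩ := (F.L_bij (𝒢.mul x y)).2.2
      (show 𝒩.p m = 𝒢.r (𝒢.mul x y) by rw [hrxy]; exact hm)
    have hn' : 𝒩.p n = 𝒢.s y := by rw [← 𝒢.s_mul x y h]; exact hn
    have e1 := F.F1 x y n h hn'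
    have e2 := F'.F1 x y n h hn'
    rw [hL] at e2
    rw [hLn] at e1 e2
    let S : Fib 𝒩 (𝒢.r x) := ⟨F.σ x y, F.σ_fib x y h⟩
    let S' : Fib 𝒩 (𝒢.r x) := ⟨F'.σ x y, F'.σ_fib x y h⟩
    let M : Fib 𝒩 (𝒢.r x) := ⟨m, hm⟩
    have hg : S * M * S⁻¹ = S' * M * S'⁻¹ := Subtype.ext (e1.symm.trans e2)
    have hfin : (S⁻¹ * S') * M = M * (S⁻¹ * S') := by
      calc (S⁻¹ * S') * M = S⁻¹ * (S' * M * S'⁻¹) * S' := by group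
        _ = S⁻¹ * (S * M * S⁻¹) * S' := by rw [hg]
        _ = M * (S⁻¹ * S') := by group
    exact congrArg Subtype.val hfin
  refine ⟨hcent, ?_, ?_, ?_, ?_⟩
  · intro x
    rw [F.σ_e_left x, F'.σ_e_left x]
    have := 𝒩.inv_mul (𝒩.one (𝒢.r x)); rwa [𝒩.p_one] at this
  · intro x
    rw [F.σ_e_right x, F'.σ_e_right x]
    have := 𝒩.inv_mul (𝒩.one (𝒢.r x)); rwa [𝒩.p_one] at this
  · intro x y h
    rw [𝒩.p_mul _ _ (by rw [𝒩.p_inv, F.σ_fib x y h, F'.σ_fib x y h]), 𝒩.p_inv,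
      F.σ_fib x y h]
  · intro x y z hxy hyz
    have hszxy : 𝒢.s (𝒢.mul x y) = 𝒢.r z := (𝒢.s_mul x y hxy).trans hyz
    have hrxy : 𝒢.r (𝒢.mul x y) = 𝒢.r x := 𝒢.r_mul x y hxy
    have hsyz : 𝒢.s x = 𝒢.r (𝒢.mul y z) := hxy.trans (𝒢.r_mul y z hyz).symm
    have hpc : 𝒩.p (F.σ y z) = 𝒢.s x := (F.σ_fib y z hyz).trans hxy.symm
    have hpc' : 𝒩.p (F'.σ y z) = 𝒢.s x := (F'.σ_fib y z hyz).trans hxy.symm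
    have hpic : 𝒩.p (𝒩.inv (F.σ y z)) = 𝒢.s x := (𝒩.p_inv _).trans hpc
    have hprod : 𝒩.p (𝒩.mul (𝒩.inv (F.σ y z)) (F'.σ y z)) = 𝒢.s x := by
      rw [𝒩.p_mul _ _ (hpic.trans hpc'.symm)]; exact hpic
    set u := 𝒢.r x with hu
    let A : Fib 𝒩 u := ⟨F.σ x y, F.σ_fib x y hxy⟩
    let A' : Fib 𝒩 u := ⟨F'.σ x y, F'.σ_fib x y hxy⟩
    let B : Fib 𝒩 u := ⟨F.σ (𝒢.mul x y) z, (F.σ_fib _ _ hszxy).trans hrxy⟩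
    let B' : Fib 𝒩 u := ⟨F'.σ (𝒢.mul x y) z, (F'.σ_fib _ _ hszxy).trans hrxy⟩
    let Ct : Fib 𝒩 u := ⟨F.L x (F.σ y z), F.L_fib x _ hpc⟩
    let Ct' : Fib 𝒩 u := ⟨F.L x (F'.σ y z), F.L_fib x _ hpc'⟩
    let D : Fib 𝒩 u := ⟨F.σ x (𝒢.mul y z), F.σ_fib x _ hsyz⟩
    let D' : Fib 𝒩 u := ⟨F'.σ x (𝒢.mul y z), F'.σ_fib x _ hsyz⟩
    have h1 : A * B = Ct * D := Subtype.ext (by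
      have := F.F2 x y z hxy hyz
      have hr2 : 𝒩.p (F.σ (𝒢.mul x y) z) = 𝒢.r (𝒢.mul x y) := F.σ_fib _ _ hszxy
      exact this)
    have h2 : A' * B' = Ct' * D' := Subtype.ext (by
      have := F'.F2 x y z hxy hyz
      rwa [hL] at this)
    have hA : ∀ M : Fib 𝒩 u, (A⁻¹ * A') * M = M * (A⁻¹ * A') :=
      fun M => Subtype.ext (hcent x y hxy M.1 M.2)
    have hC : ∀ M : Fib 𝒩 u, (Ct⁻¹ * Ct') * M = M * (Ct⁻¹ * Ct') := by
      intro M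
      obtain ⟨n, hn, hLn⟩ := (F.L_bij x).2.2 (show 𝒩.p M.1 = 𝒢.r x from M.2)
      have hn : 𝒩.p n = 𝒢.s x := hn
      apply Subtype.ext
      calc 𝒩.mul (𝒩.mul (𝒩.inv (F.L x (F.σ y z))) (F.L x (F'.σ y z))) M.1
          = 𝒩.mul (F.L x (𝒩.mul (𝒩.inv (F.σ y z)) (F'.σ y z))) (F.L x n) := by
            rw [F.L_mul x _ _ hpic hpc', F.L_inv x _ hpc, hLn]
        _ = F.L x (𝒩.mul (𝒩.mul (𝒩.inv (F.σ y z)) (F'.σ y z)) n) :=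
            (F.L_mul x _ _ hprod hn).symm
        _ = F.L x (𝒩.mul n (𝒩.mul (𝒩.inv (F.σ y z)) (F'.σ y z))) := by
            rw [hcent y z hyz n (hn.trans hxy)]
        _ = 𝒩.mul (F.L x n) (F.L x (𝒩.mul (𝒩.inv (F.σ y z)) (F'.σ y z))) :=
            F.L_mul x _ _ hn hprod
        _ = 𝒩.mul M.1 (𝒩.mul (𝒩.inv (F.L x (F.σ y z))) (F.L x (F'.σ y z))) := by
            rw [hLn, F.L_mul x _ _ hpic hpc', F.L_inv x _ hpc]
    have hkey := key_group A A' B B' Ct Ct' D D' h1 h2 hA hC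
    have := congrArg Subtype.val hkey
    rw [F.L_mul x _ _ hpic hpc', F.L_inv x _ hpc]
    exact this
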